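/- arXiv:1102.2171 — 3 statements merged into one kernel-verified Lean document; each statement's English description precedes it below -/
import Mathlib

section
/- Let μ be a probability distribution on the nonnegative integers with μ_odd > 0. Then for all x ∈ [-1, 0), (1 + G_μ(x))/(1 - G_μ(x)) ≤ 2/μ_odd. -/
theorem stmt_4 (μ : ℕ → ℝ) (hpos : ∀ k, 0 ≤ μ k) (hsum : ∑' k, μ k = 1)
    (hodd : 0 < ∑' k, (if Odd k then μ k else 0))
    (x : ℝ) (hx : x ∈ Set.Ico (-1 : ℝ) 0) :
    (1 + ∑' k, μ k * x ^ k) / (1 - ∑' k, μ k * x ^ k)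
      ≤ 2 / ∑' k, (if Odd k then μ k else 0) := by
  obtain ⟨hx1, hx0⟩ := hx
  have hμsum : Summable μ := by
    by_contra h
    rw [tsum_eq_zero_of_not_summable h] at hsum
    norm_num at hsum
  have hxabs : |x| ≤ 1 := abs_le.mpr ⟨hx1, by linarith⟩
  have hbound : ∀ k : ℕ, |μ k * x ^ k| ≤ μ k := by
    intro k
    rw [abs_mul, abs_of_nonneg (hpos k), abs_pow]
    calc μ k * |x| ^ k ≤ μ k * 1 := by
          exact mul_le_mul_of_nonneg_left (pow_le_one₀ (abs_nonneg x) hxabs) (hpos k)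
      _ = μ k := mul_one _
  have hGsum : Summable (fun k => μ k * x ^ k) :=
    hμsum.of_norm_bounded (fun k => by rw [Real.norm_eq_abs]; exact hbound k)
  have hOsum : Summable (fun k => if Odd k then μ k else 0) := by
    apply hμsum.of_nonneg_of_le
    · intro k; split <;> simp [hpos k]
    · intro k; split <;> simp [hpos k]
  set G := ∑' k, μ k * x ^ k with hGdef
  set O := ∑' k, (if Odd k then μ k else 0) with hOdef
  have hG_le : G ≤ 1 - O := by
    have h1 : (1 : ℝ) - O = ∑' k, (μ k - if Odd k then μ k else 0) := by
      rw [hμsum.tsum_sub hOsum, hsum]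
    rw [h1]
    apply Summable.tsum_le_tsum _ hGsum (hμsum.sub hOsum)
    intro k
    by_cases hk : Odd k
    · simp only [hk, if_pos]
      have : x ^ k ≤ 0 := Odd.pow_nonpos hk (le_of_lt hx0)
      nlinarith [hpos k]
    · simp only [hk, if_neg, not_false_iff, sub_zero]
      have : x ^ k ≤ 1 := by
        calc x ^ k ≤ |x ^ k| := le_abs_self _
          _ = |x| ^ k := abs_pow x k
          _ ≤ 1 := pow_le_one₀ (abs_nonneg x) hxabs
      nlinarith [hpos k]
  have hG_ge : -1 ≤ G := by
    have h1 : (-1 : ℝ) = ∑' k, (-(μ k)) := by rw [tsum_neg, hsum]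
    rw [h1]
    apply Summable.tsum_le_tsum _ hμsum.neg hGsum
    intro k
    have : -(x ^ k) ≤ 1 := by
      have := hbound k
      have h2 : |x ^ k| ≤ 1 := by
        rw [abs_pow]; exact pow_le_one₀ (abs_nonneg x) hxabs
      linarith [abs_le.mp h2]
    nlinarith [hpos k, abs_le.mp ((abs_pow x k) ▸ (show |x|^k ≤ 1 from pow_le_one₀ (abs_nonneg x) hxabs))]
  have h2 : 0 < 1 - G := by linarith
  exact div_le_div₀ (by norm_num) (by linarith) hodd (by linarith)
end

section
/- Let E be a finite nonnegative measure on [-1,1] with ∫ (1+x)/(1-x) dE(x) < ∞, and let μ be a probability distribution on ℕ with μ_odd > 0. Then ∫ (1 + G_μ(x))/(1 - G_μ(x)) dE(x) ≤ (2/μ_odd) E([-1,0)) + (1/(1-μ(0))) ∫_{[0,1]} 2/(1-x) dE(x) < ∞. -/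
open MeasureTheory
open scoped ENNReal

theorem stmt_9 (E : Measure ℝ) [IsFiniteMeasure E]
    (hsupp : E (Set.Icc (-1 : ℝ) 1)ᶜ = 0)
    (hfin : ∫⁻ x, ENNReal.ofReal (1 + x) / ENNReal.ofReal (1 - x) ∂E < ⊤)
    (μ : ℕ → ℝ) (hpos : ∀ k, 0 ≤ μ k) (hsum : ∑' k, μ k = 1)
    (hodd : 0 < ∑' k, (if Odd k then μ k else 0)) :
    (∫⁻ x, ENNReal.ofReal (1 + ∑' k, μ k * x ^ k) /
        ENNReal.ofReal (1 - ∑' k, μ k * x ^ k) ∂E)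
      ≤ ENNReal.ofReal (2 / ∑' k, (if Odd k then μ k else 0)) * E (Set.Ico (-1 : ℝ) 0)
        + ENNReal.ofReal (1 / (1 - μ 0)) *
            ∫⁻ x in Set.Icc (0 : ℝ) 1, 2 / ENNReal.ofReal (1 - x) ∂E
    ∧ ENNReal.ofReal (2 / ∑' k, (if Odd k then μ k else 0)) * E (Set.Ico (-1 : ℝ) 0)
        + ENNReal.ofReal (1 / (1 - μ 0)) *
            (∫⁻ x in Set.Icc (0 : ℝ) 1, 2 / ENNReal.ofReal (1 - x) ∂E) < ⊤ := by
  have hμsum : Summable μ := by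
    by_contra h
    rw [tsum_eq_zero_of_not_summable h] at hsum
    norm_num at hsum
  set m := ∑' k, (if Odd k then μ k else 0) with hm
  have hmsum : Summable (fun k => if Odd k then μ k else 0) :=
    hμsum.of_nonneg_of_le (fun k => by by_cases h : Odd k <;> simp [h, hpos k])
      (fun k => by by_cases h : Odd k <;> simp [h, hpos k])
  have hitesum : Summable (fun k : ℕ => if k = 0 then 0 else μ k) :=
    hμsum.of_nonneg_of_le (fun k => by by_cases h : k = 0 <;> simp [h] <;> exact hpos _)
      (fun k => by by_cases h : k = 0 <;> simp [h] <;> exact hpos _)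
  have h1μ0 : ∑' k : ℕ, (if k = 0 then 0 else μ k) = 1 - μ 0 := by
    have h := Summable.tsum_eq_add_tsum_ite hμsum 0
    rw [hsum] at h
    linarith
  have hm_le : m ≤ 1 - μ 0 := by
    rw [hm, ← h1μ0]
    refine Summable.tsum_le_tsum (fun k => ?_) hmsum hitesum
    by_cases h : Odd k
    · have hk0 : k ≠ 0 := by rintro rfl; exact (Nat.not_odd_iff_even.2 Even.zero) h
      simp [h, hk0]
    · by_cases h0 : k = 0 <;> simp [h, h0, hpos k]
  have hμ0lt : μ 0 < 1 := by linarith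
  -- pointwise summability facts for x ∈ [-1,1]
  have hfacts : ∀ x : ℝ, |x| ≤ 1 →
      Summable (fun k => μ k * x ^ k) ∧ (∑' k, μ k * x ^ k) ≤ 1 ∧
      1 - (∑' k, μ k * x ^ k) = ∑' k, (μ k - μ k * x ^ k) := by
    intro x hx
    have habs : ∀ k, |μ k * x ^ k| ≤ μ k := by
      intro k
      rw [abs_mul, abs_of_nonneg (hpos k), abs_pow]
      exact mul_le_of_le_one_right (hpos k) (pow_le_one₀ (abs_nonneg x) hx)
    have hS : Summable (fun k => μ k * x ^ k) :=
      (hμsum.of_nonneg_of_le (fun k => abs_nonneg _) habs).of_abs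
    refine ⟨hS, ?_, ?_⟩
    · rw [← hsum]
      refine Summable.tsum_le_tsum (fun k => ?_) hS hμsum
      calc μ k * x ^ k ≤ |μ k * x ^ k| := le_abs_self _
        _ ≤ μ k := habs k
    · rw [Summable.tsum_sub hμsum hS, hsum]
  -- the key pointwise bounds
  have hboundA : ∀ x ∈ Set.Ico (-1 : ℝ) 0,
      ENNReal.ofReal (1 + ∑' k, μ k * x ^ k) / ENNReal.ofReal (1 - ∑' k, μ k * x ^ k)
        ≤ ENNReal.ofReal (2 / m) := by
    intro x hx
    obtain ⟨hS, hGle, h1G⟩ := hfacts x (by rw [abs_le]; exact ⟨hx.1, by linarith [hx.2]⟩)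
    have hlow : m ≤ 1 - ∑' k, μ k * x ^ k := by
      rw [h1G, hm]
      refine Summable.tsum_le_tsum (fun k => ?_) hmsum (hμsum.sub hS)
      by_cases h : Odd k
      · have hxk : x ^ k ≤ 0 := h.pow_nonpos hx.2.le
        simp only [h, if_true]
        nlinarith [hpos k]
      · have hxk : x ^ k ≤ 1 := by
          calc x ^ k ≤ |x ^ k| := le_abs_self _
            _ = |x| ^ k := abs_pow x k
            _ ≤ 1 := pow_le_one₀ (abs_nonneg x) (by rw [abs_le]; exact ⟨hx.1, by linarith [hx.2]⟩)
        simp only [h, if_false]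
        nlinarith [hpos k]
    have hd : 0 < 1 - ∑' k, μ k * x ^ k := lt_of_lt_of_le hodd hlow
    rw [← ENNReal.ofReal_div_of_pos hd]
    exact ENNReal.ofReal_le_ofReal (div_le_div₀ (by norm_num) (by linarith) hodd hlow)
  have hboundB : ∀ x ∈ Set.Icc (0 : ℝ) 1,
      ENNReal.ofReal (1 + ∑' k, μ k * x ^ k) / ENNReal.ofReal (1 - ∑' k, μ k * x ^ k)
        ≤ ENNReal.ofReal (1 / (1 - μ 0)) * (2 / ENNReal.ofReal (1 - x)) := by
    intro x hx
    obtain ⟨hS, hGle, h1G⟩ := hfacts x (by rw [abs_le]; exact ⟨by linarith [hx.1], hx.2⟩)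
    rcases lt_or_eq_of_le hx.2 with hxlt | hxeq
    · have h1x : 0 < 1 - x := by linarith
      have hlow : (1 - μ 0) * (1 - x) ≤ 1 - ∑' k, μ k * x ^ k := by
        rw [h1G]
        calc (1 - μ 0) * (1 - x) = ∑' k : ℕ, (if k = 0 then 0 else μ k) * (1 - x) := by
              rw [tsum_mul_right, h1μ0]
          _ ≤ ∑' k, (μ k - μ k * x ^ k) := by
              refine Summable.tsum_le_tsum (fun k => ?_) (hitesum.mul_right _) (hμsum.sub hS)
              match k with
              | 0 => simp
              | (n+1) =>
                have hxk : x ^ (n + 1) ≤ x := by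
                  calc x ^ (n + 1) ≤ x ^ 1 := pow_le_pow_of_le_one hx.1 hx.2 (by omega)
                    _ = x := pow_one x
                simp only [Nat.succ_ne_zero, if_false]
                nlinarith [hpos (n+1)]
      have hc : 0 < (1 - μ 0) * (1 - x) := mul_pos (by linarith) h1x
      have hd : 0 < 1 - ∑' k, μ k * x ^ k := lt_of_lt_of_le hc hlow
      have hrhs : ENNReal.ofReal (1 / (1 - μ 0)) * (2 / ENNReal.ofReal (1 - x))
          = ENNReal.ofReal (2 / ((1 - μ 0) * (1 - x))) := by
        rw [show (2 : ℝ≥0∞) = ENNReal.ofReal 2 by norm_num,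
          ← ENNReal.ofReal_div_of_pos h1x,
          ← ENNReal.ofReal_mul (one_div_nonneg.2 (by linarith))]
        congr 1
        rw [div_mul_div_comm, one_mul]
      rw [hrhs, ← ENNReal.ofReal_div_of_pos hd]
      exact ENNReal.ofReal_le_ofReal
        (div_le_div₀ (by norm_num) (by linarith) hc hlow)
    · have h0 : ENNReal.ofReal (1 - x) = 0 := by
        rw [← hxeq]; simp
      rw [h0, ENNReal.div_zero (by norm_num), ENNReal.mul_top (by
        simp only [ne_eq, ENNReal.ofReal_eq_zero, not_le]
        exact one_div_pos.2 (by linarith))]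
      exact le_top
  -- split the integral
  have hres : E.restrict (Set.Icc (-1 : ℝ) 1) = E :=
    Measure.restrict_eq_self_of_ae_mem (by
      rw [Filter.eventually_iff, mem_ae_iff]
      simpa [Set.Icc] using hsupp)
  have hsplit : Set.Ico (-1 : ℝ) 0 ∪ Set.Icc (0 : ℝ) 1 = Set.Icc (-1 : ℝ) 1 :=
    Set.Ico_union_Icc_eq_Icc (by norm_num) (by norm_num)
  have hdisj : Disjoint (Set.Ico (-1 : ℝ) 0) (Set.Icc (0 : ℝ) 1) := by
    rw [Set.disjoint_left]
    rintro x ⟨_, hx2⟩ ⟨hx3, _⟩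
    linarith
  set f : ℝ → ℝ≥0∞ := fun x =>
    ENNReal.ofReal (1 + ∑' k, μ k * x ^ k) / ENNReal.ofReal (1 - ∑' k, μ k * x ^ k) with hf
  have hmain : (∫⁻ x, f x ∂E)
      ≤ ENNReal.ofReal (2 / m) * E (Set.Ico (-1 : ℝ) 0)
        + ENNReal.ofReal (1 / (1 - μ 0)) *
            ∫⁻ x in Set.Icc (0 : ℝ) 1, 2 / ENNReal.ofReal (1 - x) ∂E := by
    conv_lhs => rw [← hres]
    rw [← hsplit, lintegral_union measurableSet_Icc hdisj]
    gcongr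
    · calc ∫⁻ x in Set.Ico (-1 : ℝ) 0, f x ∂E
          ≤ ∫⁻ _ in Set.Ico (-1 : ℝ) 0, ENNReal.ofReal (2 / m) ∂E :=
            setLIntegral_mono' measurableSet_Ico hboundA
        _ = ENNReal.ofReal (2 / m) * E (Set.Ico (-1 : ℝ) 0) := setLIntegral_const _ _
    · calc ∫⁻ x in Set.Icc (0 : ℝ) 1, f x ∂E
          ≤ ∫⁻ x in Set.Icc (0 : ℝ) 1,
              ENNReal.ofReal (1 / (1 - μ 0)) * (2 / ENNReal.ofReal (1 - x)) ∂E :=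
            setLIntegral_mono' measurableSet_Icc hboundB
        _ = ENNReal.ofReal (1 / (1 - μ 0)) *
              ∫⁻ x in Set.Icc (0 : ℝ) 1, 2 / ENNReal.ofReal (1 - x) ∂E :=
            lintegral_const_mul' _ _ ENNReal.ofReal_ne_top
  refine ⟨hmain, ?_⟩
  have hI : (∫⁻ x in Set.Icc (0 : ℝ) 1, 2 / ENNReal.ofReal (1 - x) ∂E) < ⊤ := by
    have hb : ∀ x ∈ Set.Icc (0 : ℝ) 1,
        2 / ENNReal.ofReal (1 - x) ≤ 2 * (ENNReal.ofReal (1 + x) / ENNReal.ofReal (1 - x)) := by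
      intro x hx
      rw [← mul_div_assoc]
      refine ENNReal.div_le_div_right ?_ _
      have h1 : (1 : ℝ≥0∞) ≤ ENNReal.ofReal (1 + x) := by
        rw [show (1 : ℝ≥0∞) = ENNReal.ofReal 1 by simp]
        exact ENNReal.ofReal_le_ofReal (by linarith [hx.1])
      calc (2 : ℝ≥0∞) = 2 * 1 := (mul_one 2).symm
        _ ≤ 2 * ENNReal.ofReal (1 + x) := mul_le_mul_right h1 2
    calc (∫⁻ x in Set.Icc (0 : ℝ) 1, 2 / ENNReal.ofReal (1 - x) ∂E)
        ≤ ∫⁻ x in Set.Icc (0 : ℝ) 1,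
            2 * (ENNReal.ofReal (1 + x) / ENNReal.ofReal (1 - x)) ∂E :=
          setLIntegral_mono' measurableSet_Icc hb
      _ = 2 * ∫⁻ x in Set.Icc (0 : ℝ) 1,
            ENNReal.ofReal (1 + x) / ENNReal.ofReal (1 - x) ∂E :=
          lintegral_const_mul' _ _ (by norm_num)
      _ ≤ 2 * ∫⁻ x, ENNReal.ofReal (1 + x) / ENNReal.ofReal (1 - x) ∂E :=
          mul_le_mul_right (setLIntegral_le_lintegral _ _) 2
      _ < ⊤ := ENNReal.mul_lt_top (by norm_num) hfin
  exact ENNReal.add_lt_top.2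
    ⟨ENNReal.mul_lt_top ENNReal.ofReal_lt_top (measure_lt_top E _),
     ENNReal.mul_lt_top ENNReal.ofReal_lt_top hI⟩
end

section
/- The kernel P(x,·) = (1-s(x))δ_{-x}(·) + s(x)U(·) on [-1,1], where s(x) = √(1-|x|) and U is the uniform distribution on [-1,1], is reversible with respect to the probability density π(x) ∝ 1/√(1-|x|) on [-1,1]. -/
open MeasureTheory ENNReal

/-- The counterexample kernel `P(x,·) = (1-s(x))δ₋ₓ + s(x)U` with `s(x)=√(1-|x|)`
and `U` the uniform distribution on `[-1,1]`, evaluated on a set `B`. -/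
noncomputable def Pker (x : ℝ) (B : Set ℝ) : ℝ≥0∞ :=
  ENNReal.ofReal (1 - Real.sqrt (1 - |x|)) * B.indicator (fun _ => 1) (-x)
    + ENNReal.ofReal (Real.sqrt (1 - |x|)) * (volume (B ∩ Set.Icc (-1 : ℝ) 1) / 2)

open Set

/-- The "delta part" density `π(x)(1 - s(x))`. -/
noncomputable def gfun (x : ℝ) : ℝ≥0∞ :=
  ENNReal.ofReal (1 / (4 * Real.sqrt (1 - |x|))) * ENNReal.ofReal (1 - Real.sqrt (1 - |x|))

lemma gfun_even (x : ℝ) : gfun (-x) = gfun x := by simp [gfun, abs_neg]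

lemma sqrtabs_meas : Measurable fun x : ℝ => Real.sqrt (1 - |x|) :=
  (Real.continuous_sqrt.comp (continuous_const.sub continuous_abs)).measurable

lemma gfun_meas : Measurable gfun :=
  ((measurable_const.div (measurable_const.mul sqrtabs_meas)).ennreal_ofReal).mul
    ((measurable_const.sub sqrtabs_meas).ennreal_ofReal)

lemma hsym (S : Set ℝ) (hS : MeasurableSet S) :
    ∫⁻ x in S, gfun x = ∫⁻ x in Neg.neg ⁻¹' S, gfun x := by
  rw [← lintegral_indicator hS, ← lintegral_indicator (hS.preimage measurable_neg)]
  rw [← (Measure.measurePreserving_neg (volume : Measure ℝ)).lintegral_comp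
      (gfun_meas.indicator hS)]
  congr 1; funext x
  by_cases h : -x ∈ S <;> simp [indicator, h, gfun_even]

lemma integrand_eq (x : ℝ) :
    ENNReal.ofReal (1 / (4 * Real.sqrt (1 - |x|))) * ENNReal.ofReal (Real.sqrt (1 - |x|))
      = (Ioo (-1:ℝ) 1).indicator (fun _ => ENNReal.ofReal (1/4)) x := by
  by_cases h : x ∈ Ioo (-1:ℝ) 1
  · have h1 : 0 < 1 - |x| := by
      rcases h with ⟨h1, h2⟩; rw [sub_pos, abs_lt]; exact ⟨h1, h2⟩
    have hs : 0 < Real.sqrt (1 - |x|) := Real.sqrt_pos.2 h1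
    rw [indicator_of_mem h, ← ENNReal.ofReal_mul (by positivity)]
    congr 1
    field_simp
  · have h1 : 1 - |x| ≤ 0 := by
      simp only [mem_Ioo, not_and_or, not_lt] at h
      rcases h with h | h
      · have : 1 ≤ |x| := by rw [abs_of_nonpos (by linarith)]; linarith
        linarith
      · have : 1 ≤ |x| := le_trans h (le_abs_self x)
        linarith
    have hs : Real.sqrt (1 - |x|) = 0 := Real.sqrt_eq_zero_of_nonpos h1
    rw [indicator_of_notMem h, hs]
    simp

lemma unif (T : Set ℝ) :
    ∫⁻ x in T ∩ Icc (-1:ℝ) 1,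
        ENNReal.ofReal (1 / (4 * Real.sqrt (1 - |x|))) * ENNReal.ofReal (Real.sqrt (1 - |x|))
      = ENNReal.ofReal (1/4) * volume (T ∩ Icc (-1:ℝ) 1) := by
  simp only [integrand_eq]
  rw [lintegral_indicator measurableSet_Ioo, Measure.restrict_restrict measurableSet_Ioo,
    setLIntegral_const]
  congr 1
  refine (measure_congr (μ := volume) (MeasureTheory.ae_eq_set_inter (Ioo_ae_eq_Icc (μ := volume) (a := (-1:ℝ)) (b := 1)) (Filter.EventuallyEq.refl _ _))).trans ?_
  congr 1
  exact inter_eq_right.mpr inter_subset_right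

lemma split (A B : Set ℝ) (hB : MeasurableSet B) :
    ∫⁻ x in A ∩ Icc (-1:ℝ) 1,
        ENNReal.ofReal (1 / (4 * Real.sqrt (1 - |x|))) * Pker x B ∂volume
      = (∫⁻ x in Neg.neg ⁻¹' B ∩ (A ∩ Icc (-1:ℝ) 1), gfun x)
        + ENNReal.ofReal (1/4) * volume (A ∩ Icc (-1:ℝ) 1)
          * (volume (B ∩ Icc (-1:ℝ) 1) / 2) := by
  have step1 : ∀ x : ℝ,
      ENNReal.ofReal (1 / (4 * Real.sqrt (1 - |x|))) * Pker x B
        = (Neg.neg ⁻¹' B).indicator gfun x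
          + (ENNReal.ofReal (1 / (4 * Real.sqrt (1 - |x|)))
              * ENNReal.ofReal (Real.sqrt (1 - |x|)))
            * (volume (B ∩ Icc (-1:ℝ) 1) / 2) := by
    intro x
    rw [Pker, mul_add, ← mul_assoc, ← mul_assoc]
    congr 1
    by_cases h : -x ∈ B <;> simp [indicator, h, gfun]
  simp only [step1]
  rw [lintegral_add_left (gfun_meas.indicator (hB.preimage measurable_neg))]
  congr 1
  · rw [lintegral_indicator (hB.preimage measurable_neg),
      Measure.restrict_restrict (hB.preimage measurable_neg)]
  · rw [lintegral_mul_const (f := fun x : ℝ =>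
          ENNReal.ofReal (1 / (4 * Real.sqrt (1 - |x|))) * ENNReal.ofReal (Real.sqrt (1 - |x|))) _
      (((measurable_const.div (measurable_const.mul sqrtabs_meas)).ennreal_ofReal.mul
        sqrtabs_meas.ennreal_ofReal : Measurable fun x : ℝ =>
          ENNReal.ofReal (1 / (4 * Real.sqrt (1 - |x|))) * ENNReal.ofReal (Real.sqrt (1 - |x|)))),
      unif A]

/-- Reversibility: `π(dx)P(x,dy) = π(dy)P(y,dx)` with `π(x) = 1/(4√(1-|x|))` on `[-1,1]`. -/
theorem stmt_13 (A B : Set ℝ) (hA : MeasurableSet A) (hB : MeasurableSet B) :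
    ∫⁻ x in A ∩ Set.Icc (-1 : ℝ) 1,
        ENNReal.ofReal (1 / (4 * Real.sqrt (1 - |x|))) * Pker x B ∂volume
      = ∫⁻ x in B ∩ Set.Icc (-1 : ℝ) 1,
          ENNReal.ofReal (1 / (4 * Real.sqrt (1 - |x|))) * Pker x A ∂volume := by
  rw [split A B hB, split B A hA]
  congr 1
  · have hset : Neg.neg ⁻¹' (Neg.neg ⁻¹' B ∩ (A ∩ Icc (-1:ℝ) 1))
        = Neg.neg ⁻¹' A ∩ (B ∩ Icc (-1:ℝ) 1) := by
      ext x
      simp only [mem_preimage, mem_inter_iff, mem_Icc, neg_neg]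
      constructor
      · rintro ⟨hb, ha, h1, h2⟩; exact ⟨ha, hb, by linarith, by linarith⟩
      · rintro ⟨ha, hb, h1, h2⟩; exact ⟨hb, ha, by linarith, by linarith⟩
    rw [hsym _ ((hB.preimage measurable_neg).inter (hA.inter measurableSet_Icc)), hset]
  · simp only [div_eq_mul_inv]; ring
end
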